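/- Let G = C_{n₁} ⊕ C_{n₂} ⊕ C_{n₃} with 1 < n₁ | n₂ | n₃. Suppose η(C_{n₁}³) ≤ a(n₁−1) + 1 for a constant a ≥ 3. Then D(G) ≤ (n₁−1) + (n₂−1) + (n₃−1) + 1 + (a−3)(n₁−1). -/

import Mathlib

/-- The `m`-th Davenport constant: smallest `t` such that every sequence (multiset) over `G`
of length `≥ t` contains `m` disjoint non-empty zero-sum subsequences. -/
noncomputable def DavenportM (G : Type*) [AddCommGroup G] (m : ℕ) : ℕ :=
  sInf {t | ∀ S : Multiset G, t ≤ Multiset.card S →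
    ∃ L : Multiset (Multiset G), Multiset.card L = m ∧
      (∀ T ∈ L, T ≠ 0 ∧ T.sum = 0) ∧ L.sum ≤ S}

/-- The Davenport constant: smallest `t` such that every sequence over `G` of length `≥ t`
has a non-empty zero-sum subsequence. -/
noncomputable def Davenport (G : Type*) [AddCommGroup G] : ℕ :=
  sInf {t | ∀ S : Multiset G, t ≤ Multiset.card S → ∃ T ≤ S, T ≠ 0 ∧ T.sum = 0}

/-- `η(G)`: smallest `t` such that every sequence over `G` of length `≥ t` has a non-empty
zero-sum subsequence of length at most `exp G`. -/
noncomputable def etaC (G : Type*) [AddCommGroup G] : ℕ :=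
  sInf {t | ∀ S : Multiset G, t ≤ Multiset.card S →
    ∃ T ≤ S, T ≠ 0 ∧ T.sum = 0 ∧ Multiset.card T ≤ AddMonoid.exponent G}

/-- The Erdős–Ginzburg–Ziv constant `s(G)`: smallest `t` such that every sequence over `G` of
length `≥ t` has a zero-sum subsequence of length exactly `exp G`. -/
noncomputable def egz (G : Type*) [AddCommGroup G] : ℕ :=
  sInf {t | ∀ S : Multiset G, t ≤ Multiset.card S →
    ∃ T ≤ S, T.sum = 0 ∧ Multiset.card T = AddMonoid.exponent G}





lemma my_exists_le_card {α : Type*} {S : Multiset α} {k : ℕ} (h : k ≤ Multiset.card S) :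
    ∃ T ≤ S, Multiset.card T = k := by
  refine ⟨↑(S.toList.take k), ?_, ?_⟩
  · have h1 : (↑(S.toList.take k) : Multiset α) ≤ ↑S.toList :=
      (S.toList.take_sublist k).subperm
    rwa [S.coe_toList] at h1
  · simp only [Multiset.coe_card, List.length_take, Multiset.length_toList]
    omega

open Multiset in
lemma my_pullback {α β : Type*} (f : α → β) :
    ∀ (T : Multiset β) (S : Multiset α), T ≤ S.map f → ∃ B ≤ S, B.map f = T := by
  intro T
  induction T using Multiset.induction with
  | empty => exact fun S _ => ⟨0, Multiset.zero_le _, rfl⟩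
  | cons b T ih =>
    intro S hle
    have hb : b ∈ S.map f := mem_of_le hle (mem_cons_self _ _)
    obtain ⟨a, haS, rfl⟩ := mem_map.1 hb
    obtain ⟨S', rfl⟩ := exists_cons_of_mem haS
    rw [map_cons] at hle
    obtain ⟨B', hB'le, hB'map⟩ := ih S' ((cons_le_cons_iff _).1 hle)
    exact ⟨a ::ₘ B', cons_le_cons _ hB'le, by rw [map_cons, hB'map]⟩

open Multiset in
lemma my_choice_map {α β : Type*} (f : α → β) :
    ∀ (Y : Multiset β), (∀ a ∈ Y, ∃ b, f b = a) → ∃ Y' : Multiset α, Y'.map f = Y := by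
  intro Y
  induction Y using Multiset.induction with
  | empty => exact fun _ => ⟨(0 : Multiset α), rfl⟩
  | cons a Y ih =>
    intro h
    obtain ⟨b, hb⟩ := h a (mem_cons_self _ _)
    obtain ⟨Y', hY'⟩ := ih fun c hc => h c (mem_cons_of_mem hc)
    exact ⟨b ::ₘ Y', by rw [map_cons, hb, hY']⟩

open Multiset in
lemma my_sum_join {G : Type*} [AddCommMonoid G] :
    ∀ (L : Multiset (Multiset G)), L.sum.sum = (L.map Multiset.sum).sum := by
  intro L
  induction L using Multiset.induction with
  | empty => simp
  | cons B L ih => simp [ih]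

lemma my_sum_le_sum {G : Type*} {L L' : Multiset (Multiset G)} (h : L ≤ L') :
    L.sum ≤ L'.sum := by
  obtain ⟨d, rfl⟩ := Multiset.le_iff_exists_add.1 h
  simpa using Multiset.le_add_right _ _

/-- Cyclic: any sequence of `n ≤ card` elements over `ZMod n` has a nonempty zero-sum subseq. -/
lemma my_cyclic {n : ℕ} (hn : 0 < n) (S : Multiset (ZMod n)) (hS : n ≤ Multiset.card S) :
    ∃ T ≤ S, T ≠ 0 ∧ T.sum = 0 := by
  haveI : NeZero n := ⟨hn.ne'⟩
  set l := S.toList with hl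
  have hlen : n ≤ l.length := by rw [hl, Multiset.length_toList]; exact hS
  have : ¬ Function.Injective (fun i : Fin (n+1) => ((l.take i).sum : ZMod n)) := by
    intro hinj
    have := Fintype.card_le_of_injective _ hinj
    simp [ZMod.card] at this
  rw [Function.not_injective_iff] at this
  obtain ⟨i, j, hsum, hne⟩ := this
  wlog hij : (i : ℕ) < (j : ℕ) generalizing i j
  · exact this j i hsum.symm hne.symm (by omega)
  refine ⟨↑((l.take j).drop i), ?_, ?_, ?_⟩
  · have h1 : (↑((l.take (j:ℕ)).drop (i:ℕ)) : Multiset (ZMod n)) ≤ ↑l :=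
      (((l.take (j:ℕ)).drop_sublist (i:ℕ)).trans (l.take_sublist _)).subperm
    rw [hl] at h1 ⊢
    rwa [S.coe_toList] at h1
  · have hlen2 : ((l.take (j:ℕ)).drop (i:ℕ)).length > 0 := by
      rw [List.length_drop, List.length_take]
      omega
    intro hcontra
    rw [Multiset.coe_eq_zero] at hcontra
    rw [hcontra] at hlen2
    simp at hlen2
  · have hcat : l.take (i:ℕ) ++ (l.take (j:ℕ)).drop (i:ℕ) = l.take (j:ℕ) := by
      have h0 : (l.take (j:ℕ)).take (i:ℕ) = l.take (i:ℕ) := by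
        rw [List.take_take]
        congr 1
        omega
      conv_rhs => rw [← List.take_append_drop (i:ℕ) (l.take (j:ℕ))]
      rw [h0]
    have hs := congrArg List.sum hcat
    rw [List.sum_append] at hs
    have h2 : ((l.take (j:ℕ)).drop (i:ℕ)).sum = (l.take (j:ℕ)).sum - (l.take (i:ℕ)).sum := by
      rw [← hs]; ring
    rw [Multiset.sum_coe, h2, hsum]
    ring


open Finset MvPolynomial

variable {ι : Type*} {p : ℕ} [Fact p.Prime]

private noncomputable def g₁ (s : Finset ι) (a : ι → ZMod p × ZMod p) :
    MvPolynomial s (ZMod p) := ∑ i : s, (a i).1 • X i ^ (p - 1)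

private noncomputable def g₂ (s : Finset ι) (a : ι → ZMod p × ZMod p) :
    MvPolynomial s (ZMod p) := ∑ i : s, (a i).2 • X i ^ (p - 1)

private noncomputable def g₀ (p : ℕ) (s : Finset ι) : MvPolynomial s (ZMod p) :=
  ∑ i : s, X i ^ (p - 1)

private lemma deg_g₁ {s : Finset ι} {a : ι → ZMod p × ZMod p} :
    (g₁ s a).totalDegree ≤ p - 1 := by
  apply totalDegree_finsetSum_le
  rintro i _
  exact (totalDegree_smul_le ..).trans (totalDegree_X_pow ..).le

private lemma deg_g₂ {s : Finset ι} {a : ι → ZMod p × ZMod p} :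
    (g₂ s a).totalDegree ≤ p - 1 := by
  apply totalDegree_finsetSum_le
  rintro i _
  exact (totalDegree_smul_le ..).trans (totalDegree_X_pow ..).le

private lemma deg_g₀ (p : ℕ) [Fact p.Prime] {s : Finset ι} :
    (g₀ p s).totalDegree ≤ p - 1 := by
  apply totalDegree_finsetSum_le
  rintro i _
  exact (totalDegree_X_pow ..).le

theorem dav_pp_aux (a : ι → ZMod p × ZMod p) {s : Finset ι} (hs : #s = 2 * p - 1) :
    ∃ t ⊆ s, t.Nonempty ∧ ∑ i ∈ t, a i = 0 := by
  classical
  haveI : NeZero p := inferInstance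
  set N := Fintype.card {x // eval x (g₁ s a) = 0 ∧ eval x (g₂ s a) = 0} with hN
  let zero_sol : {x // eval x (g₁ s a) = 0 ∧ eval x (g₂ s a) = 0} :=
    ⟨0, by simp [g₁, g₂, map_sum, (Fact.out : p.Prime).one_lt, tsub_eq_zero_iff_le]⟩
  have hN₀ : 0 < N := @Fintype.card_pos _ _ ⟨zero_sol⟩
  have hs' : (g₁ s a).totalDegree + (g₂ s a).totalDegree < Fintype.card s := by
    have h2 : (2 : ℕ) ≤ p := (Fact.out : p.Prime).two_le
    have := deg_g₁ (s := s) (a := a)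
    have := deg_g₂ (s := s) (a := a)
    simp only [Fintype.card_coe, hs]
    omega
  have hpN : p ∣ N := char_dvd_card_solutions_of_add_lt p hs'
  obtain ⟨x, hx⟩ := Fintype.exists_ne_of_one_lt_card ((Fact.out : p.Prime).one_lt.trans_le <|
    Nat.le_of_dvd hN₀ hpN) zero_sol
  refine ⟨({i | x.1 i ≠ 0} : Finset _).map ⟨(↑), Subtype.val_injective⟩, ?_, ?_, ?_⟩
  · simp +contextual [subset_iff]
  · rw [← Subtype.coe_ne_coe, Function.ne_iff] at hx
    obtain ⟨i, hi⟩ := hx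
    exact ⟨i, mem_map.2 ⟨i, mem_filter.2 ⟨mem_attach _ _, hi⟩, rfl⟩⟩
  · rw [Prod.ext_iff]
    constructor
    · rw [Prod.fst_sum]
      simpa [g₁, ZMod.pow_card_sub_one, Finset.sum_filter] using x.2.1
    · rw [Prod.snd_sum]
      simpa [g₂, ZMod.pow_card_sub_one, Finset.sum_filter] using x.2.2

/-- A variant of `dav_pp_aux` for `2p-1 ≤ #s`. -/
theorem dav_pp_aux' (a : ι → ZMod p × ZMod p) {s : Finset ι} (hs : 2 * p - 1 ≤ #s) :
    ∃ t ⊆ s, t.Nonempty ∧ ∑ i ∈ t, a i = 0 := by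
  classical
  obtain ⟨s', hs's, hs'⟩ := Finset.exists_subset_card_eq hs
  obtain ⟨t, hts', ht⟩ := dav_pp_aux a hs'
  exact ⟨t, hts'.trans hs's, ht⟩

set_option maxHeartbeats 1000000 in
/-- η bound for `C_p ⊕ C_p`: `3p-2` elements contain a nonempty zero-sum subset
of size at most `p`. -/
theorem eta_pp_aux (a : ι → ZMod p × ZMod p) {s : Finset ι} (hs : #s = 3 * p - 2) :
    ∃ t ⊆ s, t.Nonempty ∧ #t ≤ p ∧ ∑ i ∈ t, a i = 0 := by
  classical
  haveI : NeZero p := inferInstance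
  have hp2 : (2 : ℕ) ≤ p := (Fact.out : p.Prime).two_le
  -- three polynomials
  set f : Fin 3 → MvPolynomial s (ZMod p) := ![g₀ p s, g₁ s a, g₂ s a] with hf
  set N := Fintype.card {x : s → ZMod p // ∀ i, eval x (f i) = 0} with hN
  let zero_sol : {x : s → ZMod p // ∀ i, eval x (f i) = 0} :=
    ⟨0, by
      intro i
      fin_cases i <;>
        simp [hf, g₀, g₁, g₂, map_sum, (Fact.out : p.Prime).one_lt, tsub_eq_zero_iff_le]⟩
  have hN₀ : 0 < N := @Fintype.card_pos _ _ ⟨zero_sol⟩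
  have hdeg : (∑ i, (f i).totalDegree) < Fintype.card s := by
    have h0 := deg_g₀ (ι := ι) p (s := s)
    have h1 := deg_g₁ (s := s) (a := a)
    have h2 := deg_g₂ (s := s) (a := a)
    have : ∑ i, (f i).totalDegree = (g₀ p s).totalDegree + (g₁ s a).totalDegree +
        (g₂ s a).totalDegree := by
      rw [hf]
      simp [Fin.sum_univ_three]
    rw [this]
    simp only [Fintype.card_coe, hs]
    omega
  have hpN : p ∣ N := by
    have h := char_dvd_card_solutions_of_fintype_sum_lt p hdeg
    convert h using 2
  obtain ⟨x, hx⟩ := Fintype.exists_ne_of_one_lt_card ((Fact.out : p.Prime).one_lt.trans_le <|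
    Nat.le_of_dvd hN₀ hpN) zero_sol
  -- the support of x gives a zero-sum subset t₀ with p ∣ #t₀
  set t₀ : Finset ι := ({i | x.1 i ≠ 0} : Finset _).map ⟨(↑), Subtype.val_injective⟩ with ht₀
  have ht₀s : t₀ ⊆ s := by simp +contextual [ht₀, subset_iff]
  have ht₀ne : t₀.Nonempty := by
    rw [← Subtype.coe_ne_coe, Function.ne_iff] at hx
    obtain ⟨i, hi⟩ := hx
    exact ⟨i, mem_map.2 ⟨i, mem_filter.2 ⟨mem_attach _ _, hi⟩, rfl⟩⟩
  have ht₀sum : ∑ i ∈ t₀, a i = 0 := by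
    rw [Prod.ext_iff]
    constructor
    · rw [Prod.fst_sum]
      simpa [ht₀, g₁, hf, ZMod.pow_card_sub_one, Finset.sum_filter] using x.2 1
    · rw [Prod.snd_sum]
      simpa [ht₀, g₂, hf, ZMod.pow_card_sub_one, Finset.sum_filter] using x.2 2
  have ht₀card : p ∣ #t₀ := by
    have h3 := x.2 0
    simp only [hf, Matrix.cons_val_zero, g₀, map_sum, map_pow, eval_X,
      ZMod.pow_card_sub_one] at h3
    rw [← CharP.cast_eq_zero_iff (ZMod p), ht₀, Finset.card_map, ← Finset.sum_boole]
    simpa [ite_not] using h3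
  have ht₀le : #t₀ ≤ 3 * p - 2 := hs ▸ Finset.card_le_card ht₀s
  -- #t₀ = p or 2p
  obtain ⟨c, hc⟩ := ht₀card
  have h1 : 1 ≤ #t₀ := ht₀ne.card_pos
  have hc3 : c < 3 := by
    by_contra hge
    push_neg at hge
    have : 3 * p ≤ p * c := by
      calc 3 * p = p * 3 := by ring
        _ ≤ p * c := Nat.mul_le_mul_left p hge
    omega
  have hc0 : 0 < c := by
    rcases Nat.eq_zero_or_pos c with rfl | h
    · rw [Nat.mul_zero] at hc; omega
    · exact h
  have hc12 : c = 1 ∨ c = 2 := by omega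
  rcases hc12 with rfl | rfl
  · exact ⟨t₀, ht₀s, ht₀ne, by omega, ht₀sum⟩
  · -- #t₀ = 2p; find a nonempty zero-sum subset of 2p-1 of them, and complement if too big
    have h2p : 2 * p - 1 ≤ #t₀ := by omega
    obtain ⟨t₁, ht₁t₀, ht₁⟩ := Finset.exists_subset_card_eq h2p
    obtain ⟨u, hut₁, hune, husum⟩ := dav_pp_aux a ht₁
    by_cases hu : #u ≤ p
    · exact ⟨u, (hut₁.trans ht₁t₀).trans ht₀s, hune, hu, husum⟩
    · refine ⟨t₀ \ u, (sdiff_subset).trans ht₀s, ?_, ?_, ?_⟩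
      · rw [← Finset.card_pos, Finset.card_sdiff_of_subset (hut₁.trans ht₁t₀)]
        have := Finset.card_le_card hut₁
        omega
      · rw [Finset.card_sdiff_of_subset (hut₁.trans ht₁t₀)]
        omega
      · have hsd := Finset.sum_sdiff (f := a) (hut₁.trans ht₁t₀)
        rw [husum, add_zero] at hsd
        rw [hsd, ht₀sum]


/-- The lift homomorphism `ZMod k →+ ZMod M` when `M = p * k`, sending `y` to `p * y`. -/
def myLift (p k M : ℕ) [NeZero k] (hM : p * k = M) : ZMod k →+ ZMod M where
  toFun y := ((p * y.val : ℕ) : ZMod M)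
  map_zero' := by simp
  map_add' y z := by
    show ((p * (y + z).val : ℕ) : ZMod M) = ((p * y.val : ℕ) : ZMod M) + ((p * z.val : ℕ) : ZMod M)
    have key : p * ((y.val + z.val) % k) + M * ((y.val + z.val) / k)
        = p * (y.val + z.val) := by
      rw [← hM, mul_assoc, ← Nat.mul_add, Nat.mod_add_div]
    have h1 : ((p * (y + z).val : ℕ) : ZMod M) = ((p * ((y.val + z.val) % k) : ℕ) : ZMod M) := by
      rw [ZMod.val_add]
    rw [h1]
    have h2 : ((p * ((y.val + z.val) % k) : ℕ) : ZMod M)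
        = ((p * ((y.val + z.val) % k) + M * ((y.val + z.val) / k) : ℕ) : ZMod M) := by
      push_cast
      simp [ZMod.natCast_self]
    rw [h2, key]
    push_cast
    ring

lemma myLift_surj {p k M : ℕ} [NeZero k] (hp : 0 < p) (hM : p * k = M) (u : ZMod M)
    (hu : p ∣ u.val) : ∃ y, myLift p k M hM y = u := by
  haveI : NeZero M := ⟨by
    rw [← hM]
    exact (Nat.mul_pos hp (Nat.pos_of_ne_zero (NeZero.ne k))).ne'⟩
  refine ⟨((u.val / p : ℕ) : ZMod k), ?_⟩
  show ((p * ((u.val / p : ℕ) : ZMod k).val : ℕ) : ZMod M) = u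
  rw [ZMod.val_natCast]
  have key : ∀ A : ℕ, p * (A % k) + M * (A / k) = p * A := by
    intro A
    rw [← hM, mul_assoc, ← Nat.mul_add, Nat.mod_add_div]
  have h2 : ((p * ((u.val / p) % k) : ℕ) : ZMod M)
      = ((p * ((u.val / p) % k) + M * ((u.val / p) / k) : ℕ) : ZMod M) := by
    push_cast
    simp [ZMod.natCast_self]
  rw [h2, key (u.val / p), Nat.mul_div_cancel' hu]
  exact ZMod.natCast_rightInverse u


open Multiset in
/-- Davenport bound for `C_p ⊕ C_p`, multiset version. -/
theorem dav_pp_multiset {p : ℕ} [Fact p.Prime] (S : Multiset (ZMod p × ZMod p))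
    (hS : 2 * p - 1 ≤ Multiset.card S) : ∃ T ≤ S, T ≠ 0 ∧ T.sum = 0 := by
  obtain ⟨t, hts, htne, htsum⟩ :=
    dav_pp_aux' (Prod.fst) (s := S.toEnumFinset) (by simpa using hS)
  refine ⟨t.1.map Prod.fst, Multiset.map_fst_le_of_subset_toEnumFinset hts, ?_, by simpa using htsum⟩
  have hpos : 0 < Multiset.card (t.1.map Prod.fst) := by simpa using htne.card_pos
  exact fun h => by simp [h] at hpos

open Multiset in
/-- η bound for `C_p ⊕ C_p`, multiset version. -/
theorem eta_pp_multiset {p : ℕ} [Fact p.Prime] (S : Multiset (ZMod p × ZMod p))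
    (hS : 3 * p - 2 ≤ Multiset.card S) :
    ∃ T ≤ S, T ≠ 0 ∧ T.sum = 0 ∧ Multiset.card T ≤ p := by
  classical
  obtain ⟨S', hS'le, hS'card⟩ := my_exists_le_card hS
  obtain ⟨t, hts, htne, htcard, htsum⟩ :=
    eta_pp_aux (Prod.fst) (s := S'.toEnumFinset) (by simpa using hS'card)
  refine ⟨t.1.map Prod.fst,
    (Multiset.map_fst_le_of_subset_toEnumFinset hts).trans hS'le, ?_, by simpa using htsum, ?_⟩
  · have hpos : 0 < Multiset.card (t.1.map Prod.fst) := by simpa using htne.card_pos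
    exact fun h => by simp [h] at hpos
  · simpa using htcard

lemma my_card_sum {G : Type*} :
    ∀ L : Multiset (Multiset G), Multiset.card L.sum = (L.map Multiset.card).sum := by
  intro L
  induction L using Multiset.induction with
  | empty => simp
  | cons B L ih => simp [ih]

/-- Extraction lemma: extract `j` disjoint non-empty blocks whose sums lie in `ker φ`,
each of size at most `e`. -/
lemma my_extract {G Q : Type*} [AddCommGroup G] [AddCommGroup Q] (φ : G →+ Q) (t e : ℕ)
    (h : ∀ S : Multiset Q, t ≤ Multiset.card S →
      ∃ T ≤ S, T ≠ 0 ∧ T.sum = 0 ∧ Multiset.card T ≤ e) :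
    ∀ (j : ℕ) (S : Multiset G), t + e * j ≤ Multiset.card S + e →
      ∃ L : Multiset (Multiset G), Multiset.card L = j ∧
        (∀ B ∈ L, B ≠ 0 ∧ φ B.sum = 0 ∧ Multiset.card B ≤ e) ∧ L.sum ≤ S := by
  intro j
  induction j with
  | zero => exact fun S _ => ⟨0, rfl, by simp, Multiset.zero_le _⟩
  | succ j ih =>
    classical
    intro S hS
    have h1 : e * (j + 1) = e * j + e := by ring
    rw [h1] at hS
    have ht : t ≤ Multiset.card S := by omega
    obtain ⟨T, hTle, hTne, hTsum, hTcard⟩ := h (S.map φ) (by simpa using ht)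
    obtain ⟨B, hBle, hBmap⟩ := my_pullback _ T S hTle
    have hcardB : Multiset.card B = Multiset.card T := by rw [← hBmap]; simp
    have hBne : B ≠ 0 := by
      intro h0
      rw [h0] at hBmap
      exact hTne hBmap.symm
    have hBsum : φ B.sum = 0 := by
      rw [map_multiset_sum, hBmap, hTsum]
    have hBcard : Multiset.card B ≤ e := hcardB ▸ hTcard
    have hrec : t + e * j ≤ Multiset.card (S - B) + e := by
      have h2 : Multiset.card (S - B) = Multiset.card S - Multiset.card B :=
        Multiset.card_sub hBle
      have h4 : Multiset.card B ≤ Multiset.card S := Multiset.card_le_card hBle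
      omega
    obtain ⟨L, hLcard, hLprop, hLle⟩ := ih (S - B) hrec
    refine ⟨B ::ₘ L, by simp [hLcard], ?_, ?_⟩
    · intro C hC
      rcases Multiset.mem_cons.1 hC with rfl | hC
      · exact ⟨hBne, hBsum, hBcard⟩
      · exact hLprop C hC
    · rw [Multiset.sum_cons]
      calc B + L.sum ≤ B + (S - B) := add_le_add_right hLle B
        _ = S := add_tsub_cancel_of_le hBle

/-- **Olson's theorem** (upper bound): `D(C_m ⊕ C_n) ≤ m + n - 1` when `m ∣ n`. -/
theorem my_olson : ∀ m n : ℕ, 0 < n → m ∣ n → ∀ S : Multiset (ZMod m × ZMod n),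
    m + n - 1 ≤ Multiset.card S → ∃ T ≤ S, T ≠ 0 ∧ T.sum = 0 := by
  intro m
  induction m using Nat.strong_induction_on with
  | _ m ih =>
  intro n hn hmn S hS
  classical
  have hm : 0 < m := Nat.pos_of_dvd_of_pos hmn hn
  by_cases hm1 : m = 1
  · subst hm1
    obtain ⟨T2, hT2le, hT2ne, hT2sum⟩ := my_cyclic hn (S.map Prod.snd)
      (by simp only [Multiset.card_map]; omega)
    obtain ⟨B, hBle, hBmap⟩ := my_pullback Prod.snd T2 S hT2le
    refine ⟨B, hBle, ?_, ?_⟩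
    · intro h0
      rw [h0] at hBmap
      exact hT2ne hBmap.symm
    · have h2 : B.sum.2 = 0 := by
        have h3 := map_multiset_sum (AddMonoidHom.snd (ZMod 1) (ZMod n)) B
        rw [show (Multiset.map (⇑(AddMonoidHom.snd (ZMod 1) (ZMod n))) B)
          = Multiset.map Prod.snd B from rfl, hBmap, hT2sum] at h3
        exact h3
      exact Prod.ext (Subsingleton.elim _ _) h2
  · -- m > 1 : induction step via the prime p = minFac m
    set p := m.minFac with hp
    haveI : Fact p.Prime := ⟨Nat.minFac_prime hm1⟩
    have hpm : p ∣ m := Nat.minFac_dvd m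
    have hpn : p ∣ n := hpm.trans hmn
    have hp2 : 2 ≤ p := (Nat.minFac_prime hm1).two_le
    set k₁ := m / p with hk₁def
    set k₂ := n / p with hk₂def
    have hk₁ : p * k₁ = m := Nat.mul_div_cancel' hpm
    have hk₂ : p * k₂ = n := Nat.mul_div_cancel' hpn
    have hk₁pos : 0 < k₁ := Nat.div_pos (Nat.le_of_dvd hm hpm) (by omega)
    have hk₂pos : 0 < k₂ := Nat.div_pos (Nat.le_of_dvd hn hpn) (by omega)
    haveI : NeZero k₁ := ⟨hk₁pos.ne'⟩
    haveI : NeZero k₂ := ⟨hk₂pos.ne'⟩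
    haveI : NeZero m := ⟨hm.ne'⟩
    haveI : NeZero n := ⟨hn.ne'⟩
    have hk₁k₂ : k₁ ∣ k₂ := by
      obtain ⟨c, hc⟩ := hmn
      refine ⟨c, Nat.eq_of_mul_eq_mul_left (by omega : 0 < p) ?_⟩
      rw [hk₂, hc, ← hk₁]
      ring
    -- the projection homomorphism onto `C_p ⊕ C_p`
    set φ : ZMod m × ZMod n →+ ZMod p × ZMod p :=
      AddMonoidHom.prodMap (ZMod.castHom hpm (ZMod p)).toAddMonoidHom
        (ZMod.castHom hpn (ZMod p)).toAddMonoidHom with hφ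
    -- extract k₁ + k₂ - 2 blocks of size ≤ p
    have harith : (3 * p - 2) + p * (k₁ + k₂ - 2) ≤ Multiset.card S + p := by
      have key : p * (k₁ + k₂ - 2) + 2 * p = p * k₁ + p * k₂ := by
        have h5 : (k₁ + k₂ - 2) + 2 = k₁ + k₂ := by omega
        calc p * (k₁ + k₂ - 2) + 2 * p = p * ((k₁ + k₂ - 2) + 2) := by ring
          _ = p * k₁ + p * k₂ := by rw [h5]; ring
      omega
    obtain ⟨L, hLcard, hLprop, hLle⟩ := my_extract φ (3 * p - 2) p
      (fun S' hS' => eta_pp_multiset S' hS') (k₁ + k₂ - 2) S harith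
    -- one more block from the remainder
    set R := S - L.sum with hR
    have hcardLsum : Multiset.card L.sum ≤ p * (k₁ + k₂ - 2) := by
      rw [my_card_sum]
      have := Multiset.sum_le_card_nsmul (L.map Multiset.card) p
        (fun x hx => by
          obtain ⟨B, hB, rfl⟩ := Multiset.mem_map.1 hx
          exact (hLprop B hB).2.2)
      simpa [hLcard, Nat.mul_comm] using this
    have hcardR : 2 * p - 1 ≤ Multiset.card R := by
      have h2 : Multiset.card R = Multiset.card S - Multiset.card L.sum :=
        Multiset.card_sub hLle
      have key : p * (k₁ + k₂ - 2) + 2 * p = p * k₁ + p * k₂ := by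
        have h5 : (k₁ + k₂ - 2) + 2 = k₁ + k₂ := by omega
        calc p * (k₁ + k₂ - 2) + 2 * p = p * ((k₁ + k₂ - 2) + 2) := by ring
          _ = p * k₁ + p * k₂ := by rw [h5]; ring
      omega
    obtain ⟨T', hT'le, hT'ne, hT'sum⟩ := dav_pp_multiset (R.map φ)
      (by simpa using hcardR)
    obtain ⟨B₀, hB₀le, hB₀map⟩ := my_pullback _ T' R hT'le
    have hB₀ne : B₀ ≠ 0 := by
      intro h0
      rw [h0] at hB₀map
      exact hT'ne hB₀map.symm
    have hB₀sum : φ B₀.sum = 0 := by rw [map_multiset_sum, hB₀map, hT'sum]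
    -- the family of k₁ + k₂ - 1 blocks
    set L' := B₀ ::ₘ L with hL'
    have hL'card : Multiset.card L' = k₁ + k₂ - 1 := by
      rw [hL', Multiset.card_cons, hLcard]
      omega
    have hL'prop : ∀ B ∈ L', B ≠ 0 ∧ φ B.sum = 0 := by
      intro B hB
      rcases Multiset.mem_cons.1 hB with rfl | hB
      · exact ⟨hB₀ne, hB₀sum⟩
      · exact ⟨(hLprop B hB).1, (hLprop B hB).2.1⟩
    have hL'le : L'.sum ≤ S := by
      rw [hL', Multiset.sum_cons]
      calc B₀ + L.sum ≤ (S - L.sum) + L.sum := add_le_add_left hB₀le _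
        _ = L.sum + (S - L.sum) := add_comm _ _
        _ = S := add_tsub_cancel_of_le hLle
    -- push the block sums into `C_{k₁} ⊕ C_{k₂}`
    set emb : ZMod k₁ × ZMod k₂ →+ ZMod m × ZMod n :=
      AddMonoidHom.prodMap (myLift p k₁ m hk₁) (myLift p k₂ n hk₂) with hemb
    have hker : ∀ y ∈ L'.map Multiset.sum, ∃ z, emb z = y := by
      intro y hy
      obtain ⟨B, hB, rfl⟩ := Multiset.mem_map.1 hy
      have hφy : φ B.sum = 0 := (hL'prop B hB).2
      have h1 : p ∣ (B.sum.1).val := by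
        have hc := congrArg Prod.fst hφy
        rw [hφ] at hc
        have hthis : (ZMod.castHom hpm (ZMod p)) B.sum.1 = 0 := hc
        rw [← ZMod.natCast_eq_zero_iff, ZMod.natCast_val]
        rwa [ZMod.castHom_apply] at hthis
      have h2 : p ∣ (B.sum.2).val := by
        have hc := congrArg Prod.snd hφy
        rw [hφ] at hc
        have hthis : (ZMod.castHom hpn (ZMod p)) B.sum.2 = 0 := hc
        rw [← ZMod.natCast_eq_zero_iff, ZMod.natCast_val]
        rwa [ZMod.castHom_apply] at hthis
      obtain ⟨z₁, hz₁⟩ := myLift_surj (by omega : 0 < p) hk₁ B.sum.1 h1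
      obtain ⟨z₂, hz₂⟩ := myLift_surj (by omega : 0 < p) hk₂ B.sum.2 h2
      refine ⟨(z₁, z₂), ?_⟩
      rw [hemb]
      have hr : (AddMonoidHom.prodMap (myLift p k₁ m hk₁) (myLift p k₂ n hk₂)) (z₁, z₂)
          = (myLift p k₁ m hk₁ z₁, myLift p k₂ n hk₂ z₂) := rfl
      rw [hr, hz₁, hz₂]
    obtain ⟨Y', hY'⟩ := my_choice_map emb (L'.map Multiset.sum) hker
    have hY'card : k₁ + k₂ - 1 ≤ Multiset.card Y' := by
      have := congrArg Multiset.card hY'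
      simp only [Multiset.card_map] at this
      rw [this, hL'card]
    -- apply the induction hypothesis
    have hk₁lt : k₁ < m := by
      rw [hk₁def]
      exact Nat.div_lt_self hm hp2
    obtain ⟨Z, hZle, hZne, hZsum⟩ := ih k₁ hk₁lt k₂ hk₂pos hk₁k₂ Y' hY'card
    -- pull everything back
    have hZemb : Z.map emb ≤ L'.map Multiset.sum := by
      rw [← hY']
      exact Multiset.map_le_map hZle
    obtain ⟨L'', hL''le, hL''map⟩ := my_pullback Multiset.sum (Z.map emb) L' hZemb
    refine ⟨L''.sum, (my_sum_le_sum hL''le).trans hL'le, ?_, ?_⟩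
    · -- non-empty
      have hZcard : 0 < Multiset.card Z := Multiset.card_pos.2 hZne
      have hL''card : 0 < Multiset.card L'' := by
        have := congrArg Multiset.card hL''map
        simp only [Multiset.card_map] at this
        omega
      obtain ⟨B, hB⟩ := Multiset.exists_mem_of_ne_zero (Multiset.card_pos.1 hL''card)
      have hBne : B ≠ 0 := (hL'prop B (Multiset.mem_of_le hL''le hB)).1
      obtain ⟨rest, hrest⟩ := Multiset.exists_cons_of_mem hB
      intro h0
      rw [hrest, Multiset.sum_cons] at h0
      have : B = 0 := by
        have := congrArg Multiset.card h0
        simp only [Multiset.card_add, Multiset.card_zero] at this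
        rw [← Multiset.card_eq_zero]
        omega
      exact hBne this
    · -- zero-sum
      rw [my_sum_join, hL''map, ← map_multiset_sum, hZsum, map_zero]

section FinalAssembly

open Multiset

/-- The η-set of `C_{n₁}³` is non-empty. -/
lemma eta_set_nonempty (n₁ : ℕ) (h₁ : 1 < n₁) :
    {t | ∀ S : Multiset (ZMod n₁ × ZMod n₁ × ZMod n₁), t ≤ Multiset.card S →
      ∃ T ≤ S, T ≠ 0 ∧ T.sum = 0 ∧
        Multiset.card T ≤ AddMonoid.exponent (ZMod n₁ × ZMod n₁ × ZMod n₁)}.Nonempty := by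
  haveI : NeZero n₁ := ⟨by omega⟩
  classical
  refine ⟨Fintype.card (ZMod n₁ × ZMod n₁ × ZMod n₁) * (n₁ - 1) + 1, ?_⟩
  intro S hS
  have hg : ∃ g : ZMod n₁ × ZMod n₁ × ZMod n₁, n₁ ≤ S.count g := by
    by_contra hcon
    push_neg at hcon
    have hsum : Multiset.card S = ∑ g ∈ S.toFinset, S.count g :=
      (Multiset.toFinset_sum_count_eq S).symm
    have hle : ∑ g ∈ S.toFinset, S.count g ≤ ∑ _g ∈ S.toFinset, (n₁ - 1) :=
      Finset.sum_le_sum fun g _ => by have := hcon g; omega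
    have hle2 : ∑ _g ∈ S.toFinset, (n₁ - 1) = S.toFinset.card * (n₁ - 1) := by
      rw [Finset.sum_const, smul_eq_mul]
    have hle3 : S.toFinset.card ≤ Fintype.card (ZMod n₁ × ZMod n₁ × ZMod n₁) :=
      Finset.card_le_univ _
    have : Multiset.card S ≤ Fintype.card (ZMod n₁ × ZMod n₁ × ZMod n₁) * (n₁ - 1) := by
      rw [hsum]
      calc ∑ g ∈ S.toFinset, S.count g ≤ S.toFinset.card * (n₁ - 1) := by omega
        _ ≤ Fintype.card (ZMod n₁ × ZMod n₁ × ZMod n₁) * (n₁ - 1) :=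
            Nat.mul_le_mul_right _ hle3
    omega
  obtain ⟨g, hg⟩ := hg
  have hsmul : ∀ x : ZMod n₁, n₁ • x = 0 := fun x => by
    rw [nsmul_eq_mul]
    simp
  have hn₁g : n₁ • g = 0 := by
    obtain ⟨x, y, z⟩ := g
    have : n₁ • ((x, y, z) : ZMod n₁ × ZMod n₁ × ZMod n₁) = (n₁ • x, n₁ • y, n₁ • z) := rfl
    rw [this, hsmul, hsmul, hsmul]
    rfl
  set d := addOrderOf g with hd
  have hddvd : d ∣ n₁ := addOrderOf_dvd_of_nsmul_eq_zero hn₁g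
  have hd0 : 0 < d := Nat.pos_of_ne_zero (by
    intro h0
    rw [h0] at hddvd
    omega)
  have hdexp : d ∣ AddMonoid.exponent (ZMod n₁ × ZMod n₁ × ZMod n₁) :=
    AddMonoid.addOrder_dvd_exponent g
  have hsmulall : ∀ x : ZMod n₁ × ZMod n₁ × ZMod n₁, n₁ • x = 0 := by
    intro ⟨x, y, z⟩
    have : n₁ • ((x, y, z) : ZMod n₁ × ZMod n₁ × ZMod n₁) = (n₁ • x, n₁ • y, n₁ • z) := rfl
    rw [this, hsmul, hsmul, hsmul]
    rfl
  have hexpdvd : AddMonoid.exponent (ZMod n₁ × ZMod n₁ × ZMod n₁) ∣ n₁ :=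
    AddMonoid.exponent_dvd_of_forall_nsmul_eq_zero hsmulall
  have hexp0 : 0 < AddMonoid.exponent (ZMod n₁ × ZMod n₁ × ZMod n₁) := by
    rcases Nat.eq_zero_or_pos (AddMonoid.exponent (ZMod n₁ × ZMod n₁ × ZMod n₁)) with h0 | h0
    · rw [h0, zero_dvd_iff] at hexpdvd
      omega
    · exact h0
  refine ⟨Multiset.replicate d g, ?_, ?_, ?_, ?_⟩
  · exact Multiset.le_count_iff_replicate_le.1 (le_trans (Nat.le_of_dvd (by omega) hddvd) hg)
  · intro h0
    have := congrArg Multiset.card h0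
    simp only [Multiset.card_replicate, Multiset.card_zero] at this
    omega
  · rw [Multiset.sum_replicate, hd]
    exact addOrderOf_nsmul_eq_zero g
  · rw [Multiset.card_replicate]
    exact Nat.le_of_dvd hexp0 hdexp

theorem stmt_13 (n₁ n₂ n₃ a : ℕ) (h₁ : 1 < n₁) (h₁₂ : n₁ ∣ n₂) (h₂₃ : n₂ ∣ n₃)
    (ha : 3 ≤ a) (hη : etaC (ZMod n₁ × ZMod n₁ × ZMod n₁) ≤ a * (n₁ - 1) + 1) :
    Davenport (ZMod n₁ × ZMod n₂ × ZMod n₃) ≤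
      (n₁ - 1) + (n₂ - 1) + (n₃ - 1) + 1 + (a - 3) * (n₁ - 1) := by
  classical
  by_cases hn₃ : n₃ = 0
  · -- the Davenport set is empty, so the infimum is 0
    subst hn₃
    rw [Davenport]
    have hempty : {t | ∀ S : Multiset (ZMod n₁ × ZMod n₂ × ZMod 0), t ≤ Multiset.card S →
        ∃ T ≤ S, T ≠ 0 ∧ T.sum = 0} = ∅ := by
      rw [Set.eq_empty_iff_forall_notMem]
      intro t ht
      obtain ⟨T, hTle, hTne, hTsum⟩ := ht (Multiset.replicate t ((0, 0, 1) :
        ZMod n₁ × ZMod n₂ × ZMod 0)) (by simp)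
      have hTrep : T = Multiset.replicate (Multiset.card T) ((0, 0, 1) :
          ZMod n₁ × ZMod n₂ × ZMod 0) := by
        apply Multiset.eq_replicate_of_mem
        intro b hb
        have := Multiset.mem_of_le hTle hb
        exact Multiset.eq_of_mem_replicate this
      have h3 : (T.sum).2.2 = (Multiset.card T) • (1 : ZMod 0) := by
        conv_lhs => rw [hTrep]
        rw [Multiset.sum_replicate]
        rfl
      rw [hTsum] at h3
      have h4 : ((Multiset.card T : ℕ) : ZMod 0) = 0 := by
        rw [nsmul_eq_mul, mul_one] at h3
        exact h3.symm
      have h5 : Multiset.card T = 0 := by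
        rwa [ZMod.natCast_eq_zero_iff, zero_dvd_iff] at h4
      exact hTne (Multiset.card_eq_zero.1 h5)
    rw [hempty]
    simp [Nat.sInf_empty]
  · -- main case
    have hn₂ : 0 < n₂ := by
      rcases Nat.eq_zero_or_pos n₂ with h | h
      · subst h
        rw [zero_dvd_iff] at h₂₃
        omega
      · exact h
    have hn₃pos : 0 < n₃ := Nat.pos_of_ne_zero hn₃
    have h₁₃ : n₁ ∣ n₃ := h₁₂.trans h₂₃
    haveI : NeZero n₁ := ⟨by omega⟩
    haveI : NeZero n₂ := ⟨hn₂.ne'⟩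
    haveI : NeZero n₃ := ⟨hn₃pos.ne'⟩
    set m := n₂ / n₁ with hmdef
    set l := n₃ / n₁ with hldef
    have hm : n₁ * m = n₂ := Nat.mul_div_cancel' h₁₂
    have hl : n₁ * l = n₃ := Nat.mul_div_cancel' h₁₃
    have hmpos : 0 < m := Nat.div_pos (Nat.le_of_dvd hn₂ h₁₂) (by omega)
    have hlpos : 0 < l := Nat.div_pos (Nat.le_of_dvd hn₃pos h₁₃) (by omega)
    haveI : NeZero m := ⟨hmpos.ne'⟩
    haveI : NeZero l := ⟨hlpos.ne'⟩
    have hml : m ∣ l := by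
      obtain ⟨c, hc⟩ := h₂₃
      refine ⟨c, Nat.eq_of_mul_eq_mul_left (by omega : 0 < n₁) ?_⟩
      rw [hl, hc, ← hm]
      ring
    -- the η-property of the quotient
    have hne := eta_set_nonempty n₁ h₁
    have htmem := Nat.sInf_mem hne
    have hteq : etaC (ZMod n₁ × ZMod n₁ × ZMod n₁)
        = sInf {t | ∀ S : Multiset (ZMod n₁ × ZMod n₁ × ZMod n₁), t ≤ Multiset.card S →
          ∃ T ≤ S, T ≠ 0 ∧ T.sum = 0 ∧
            Multiset.card T ≤ AddMonoid.exponent (ZMod n₁ × ZMod n₁ × ZMod n₁)} := rfl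
    set t := etaC (ZMod n₁ × ZMod n₁ × ZMod n₁) with htdef
    have htprop : ∀ S' : Multiset (ZMod n₁ × ZMod n₁ × ZMod n₁), t ≤ Multiset.card S' →
        ∃ T ≤ S', T ≠ 0 ∧ T.sum = 0 ∧
          Multiset.card T ≤ AddMonoid.exponent (ZMod n₁ × ZMod n₁ × ZMod n₁) := htmem
    set e := AddMonoid.exponent (ZMod n₁ × ZMod n₁ × ZMod n₁) with hedef
    have hsmul : ∀ x : ZMod n₁ × ZMod n₁ × ZMod n₁, n₁ • x = 0 := by
      intro ⟨x, y, z⟩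
      have hz : ∀ w : ZMod n₁, n₁ • w = 0 := fun w => by rw [nsmul_eq_mul]; simp
      have : n₁ • ((x, y, z) : ZMod n₁ × ZMod n₁ × ZMod n₁) = (n₁ • x, n₁ • y, n₁ • z) := rfl
      rw [this, hz, hz, hz]
      rfl
    have hedvd : e ∣ n₁ := AddMonoid.exponent_dvd_of_forall_nsmul_eq_zero hsmul
    have he : e ≤ n₁ := Nat.le_of_dvd (by omega) hedvd
    -- show that the target is in the Davenport set
    apply Nat.sInf_le
    intro S hS
    -- arithmetic preparation
    have harith : t + e * (m + l - 1) ≤ Multiset.card S + e := by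
      have hA : a * (n₁ - 1) = (a - 3) * (n₁ - 1) + 3 * (n₁ - 1) := by
        rw [← Nat.add_mul]
        congr 1
        omega
      have h8 : e * (m + l - 1) = e * (m + l - 2) + e := by
        rw [← Nat.mul_succ]
        congr 1
        omega
      have h5 : e * (m + l - 2) ≤ n₁ * (m + l - 2) := Nat.mul_le_mul_right _ he
      have h6 : n₁ * (m + l - 2) + 2 * n₁ = n₁ * (m + l) := by
        have h9 : (m + l - 2) + 2 = m + l := by omega
        calc n₁ * (m + l - 2) + 2 * n₁ = n₁ * ((m + l - 2) + 2) := by ring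
          _ = n₁ * (m + l) := by rw [h9]
      have h7 : n₁ * (m + l) = n₂ + n₃ := by rw [Nat.mul_add, hm, hl]
      have hn₂n₁ : n₁ ≤ n₂ := Nat.le_of_dvd hn₂ h₁₂
      have hn₃n₂ : n₂ ≤ n₃ := Nat.le_of_dvd hn₃pos h₂₃
      have ht' : t ≤ a * (n₁ - 1) + 1 := hη
      omega
    -- extraction
    set φ : ZMod n₁ × ZMod n₂ × ZMod n₃ →+ ZMod n₁ × ZMod n₁ × ZMod n₁ :=
      AddMonoidHom.prodMap (AddMonoidHom.id (ZMod n₁))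
        (AddMonoidHom.prodMap (ZMod.castHom h₁₂ (ZMod n₁)).toAddMonoidHom
          (ZMod.castHom h₁₃ (ZMod n₁)).toAddMonoidHom) with hφ
    obtain ⟨L, hLcard, hLprop, hLle⟩ := my_extract φ t e htprop (m + l - 1) S harith
    -- embed the block sums in `C_m ⊕ C_l`
    set emb : ZMod m × ZMod l →+ ZMod n₁ × ZMod n₂ × ZMod n₃ :=
      AddMonoidHom.prod 0 (AddMonoidHom.prodMap (myLift n₁ m n₂ hm) (myLift n₁ l n₃ hl))
      with hemb
    have hker : ∀ y ∈ L.map Multiset.sum, ∃ z, emb z = y := by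
      intro y hy
      obtain ⟨B, hB, rfl⟩ := Multiset.mem_map.1 hy
      have hφy : φ B.sum = 0 := (hLprop B hB).2.1
      rw [hφ] at hφy
      have hy1 : B.sum.1 = 0 := congrArg Prod.fst hφy
      have hy2 : (ZMod.castHom h₁₂ (ZMod n₁)) B.sum.2.1 = 0 := congrArg (fun w => w.2.1) hφy
      have hy3 : (ZMod.castHom h₁₃ (ZMod n₁)) B.sum.2.2 = 0 := congrArg (fun w => w.2.2) hφy
      have h1 : n₁ ∣ (B.sum.2.1).val := by
        rw [← ZMod.natCast_eq_zero_iff, ZMod.natCast_val]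
        rwa [ZMod.castHom_apply] at hy2
      have h2 : n₁ ∣ (B.sum.2.2).val := by
        rw [← ZMod.natCast_eq_zero_iff, ZMod.natCast_val]
        rwa [ZMod.castHom_apply] at hy3
      obtain ⟨z₁, hz₁⟩ := myLift_surj (by omega : 0 < n₁) hm B.sum.2.1 h1
      obtain ⟨z₂, hz₂⟩ := myLift_surj (by omega : 0 < n₁) hl B.sum.2.2 h2
      refine ⟨(z₁, z₂), ?_⟩
      rw [hemb]
      have hr : (AddMonoidHom.prod 0
            (AddMonoidHom.prodMap (myLift n₁ m n₂ hm) (myLift n₁ l n₃ hl))) (z₁, z₂)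
          = ((0 : ZMod n₁), myLift n₁ m n₂ hm z₁, myLift n₁ l n₃ hl z₂) := rfl
      rw [hr, hz₁, hz₂, ← hy1]
    obtain ⟨Y', hY'⟩ := my_choice_map emb (L.map Multiset.sum) hker
    have hY'card : m + l - 1 ≤ Multiset.card Y' := by
      have := congrArg Multiset.card hY'
      simp only [Multiset.card_map] at this
      rw [this, hLcard]
    obtain ⟨Z, hZle, hZne, hZsum⟩ := my_olson m l hlpos hml Y' hY'card
    have hZemb : Z.map emb ≤ L.map Multiset.sum := by
      rw [← hY']
      exact Multiset.map_le_map hZle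
    obtain ⟨L'', hL''le, hL''map⟩ := my_pullback Multiset.sum (Z.map emb) L hZemb
    refine ⟨L''.sum, (my_sum_le_sum hL''le).trans hLle, ?_, ?_⟩
    · have hZcard : 0 < Multiset.card Z := Multiset.card_pos.2 hZne
      have hL''card : 0 < Multiset.card L'' := by
        have := congrArg Multiset.card hL''map
        simp only [Multiset.card_map] at this
        omega
      obtain ⟨B, hB⟩ := Multiset.exists_mem_of_ne_zero (Multiset.card_pos.1 hL''card)
      have hBne : B ≠ 0 := (hLprop B (Multiset.mem_of_le hL''le hB)).1
      obtain ⟨rest, hrest⟩ := Multiset.exists_cons_of_mem hB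
      intro h0
      rw [hrest, Multiset.sum_cons] at h0
      have : B = 0 := by
        have := congrArg Multiset.card h0
        simp only [Multiset.card_add, Multiset.card_zero] at this
        rw [← Multiset.card_eq_zero]
        omega
      exact hBne this
    · rw [my_sum_join, hL''map, ← map_multiset_sum, hZsum]
      exact _root_.map_zero emb

end FinalAssembly
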